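/- For every m > 0 there exist a bounded continuous function g_m : [0,∞) → ℝ and constants C, c > 0 with |g_m(r)| ≤ C·e^{−c r} for all r ≥ 1, such that for every r > 0: ∫₀^∞ exp( −m²u/2 − r²/(2u) ) (2u)^{−1} du = ln₊(1/r) + g_m(r). (This is the decomposition of the covariance kernel G_m(x,y) of the whole-plane massive Gaussian free field with mass m, with r = |x−y|, into a logarithmic singularity plus a continuous bounded remainder decaying exponentially at infinity.) -/

import Mathlib

open MeasureTheory Set Real Filter


lemma aux_integrableOn {f g : ℝ → ℝ} (hf : ContinuousOn f (Set.Ioi 0)) {K : ℝ}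
    (h1 : ∀ u ∈ Set.Ioc (0:ℝ) 1, |f u| ≤ K)
    (hg : IntegrableOn g (Set.Ioi 1))
    (h2 : ∀ u ∈ Set.Ioi (1:ℝ), |f u| ≤ g u) :
    IntegrableOn f (Set.Ioi (0:ℝ)) := by
  have hsplit : Set.Ioi (0:ℝ) = Set.Ioc 0 1 ∪ Set.Ioi 1 :=
    (Set.Ioc_union_Ioi_eq_Ioi zero_le_one).symm
  rw [hsplit]
  refine MeasureTheory.IntegrableOn.union ?_ ?_
  · refine ⟨(hf.mono Set.Ioc_subset_Ioi_self).aestronglyMeasurable measurableSet_Ioc,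
      HasFiniteIntegral.restrict_of_bounded (C := K) (by simp) ?_⟩
    exact (ae_restrict_iff' measurableSet_Ioc).2 (ae_of_all _ fun u hu => by
        rw [Real.norm_eq_abs]; exact h1 u hu)
  · refine Integrable.mono hg
      ((hf.mono (Set.Ioi_subset_Ioi zero_le_one)).aestronglyMeasurable measurableSet_Ioi) ?_
    refine (ae_restrict_iff' measurableSet_Ioi).2 (ae_of_all _ fun u hu => ?_)
    rw [Real.norm_eq_abs, Real.norm_eq_abs]
    exact (h2 u hu).trans (le_abs_self _)


-- exp(-(a/u)) ≤ u/a
lemma exp_bound1 {a u : ℝ} (ha : 0 < a) (hu : 0 < u) : Real.exp (-(a/u)) ≤ u / a := by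
  have h : a / u ≤ Real.exp (a / u) := le_trans (by linarith) (Real.add_one_le_exp (a/u))
  rw [Real.exp_neg]
  calc (Real.exp (a/u))⁻¹ ≤ (a/u)⁻¹ := by
        apply inv_anti₀ (by positivity) h
    _ = u / a := by field_simp
-- exp(-(a/u)) ≤ 4 u² / a²
lemma exp_bound2 {a u : ℝ} (ha : 0 < a) (hu : 0 < u) : Real.exp (-(a/u)) ≤ 4 * u^2 / a^2 := by
  have h : a / (2*u) ≤ Real.exp (a / (2*u)) :=
    le_trans (by linarith) (Real.add_one_le_exp (a/(2*u)))
  have h2 : (a / (2*u))^2 ≤ Real.exp (a/u) := by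
    calc (a / (2*u))^2 ≤ (Real.exp (a/(2*u)))^2 := by
          apply pow_le_pow_left₀ (by positivity) h
      _ = Real.exp (a/u) := by
          rw [← Real.exp_nat_mul]
          · norm_num
            ring_nf
    
  rw [Real.exp_neg]
  calc (Real.exp (a/u))⁻¹ ≤ ((a/(2*u))^2)⁻¹ := by
        apply inv_anti₀ (by positivity) h2
    _ = 4 * u^2 / a^2 := by field_simp; ring
-- |exp(-x) - exp(-y)| ≤ |x-y| for x,y ≥ 0
lemma exp_sub_exp_le {x y : ℝ} (hx : 0 ≤ x) (hy : 0 ≤ y) :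
    |Real.exp (-x) - Real.exp (-y)| ≤ |x - y| := by
  have key : ∀ s t : ℝ, 0 ≤ s → s ≤ t → Real.exp (-s) - Real.exp (-t) ≤ t - s := by
    intro s t hs hst
    have h1 : Real.exp (-s) - Real.exp (-t) = Real.exp (-s) * (1 - Real.exp (-(t-s))) := by
      rw [mul_sub, mul_one, ← Real.exp_add]; ring_nf
    rw [h1]
    have h2 : 1 - Real.exp (-(t-s)) ≤ t - s := by
      have := Real.add_one_le_exp (-(t-s)); linarith
    have h3 : Real.exp (-s) ≤ 1 := Real.exp_le_one_iff.2 (by linarith)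
    have h4 : 0 ≤ 1 - Real.exp (-(t-s)) := by
      have : Real.exp (-(t-s)) ≤ 1 := Real.exp_le_one_iff.2 (by linarith)
      linarith
    calc Real.exp (-s) * (1 - Real.exp (-(t-s))) ≤ 1 * (t - s) := by
          apply mul_le_mul h3 h2 h4 one_pos.le
      _ = t - s := one_mul _
  rcases le_total x y with h | h
  · rw [abs_of_nonneg (by have := Real.exp_le_exp.2 (neg_le_neg h); linarith),
      abs_of_nonpos (by linarith)]
    have := key x y hx h; linarith
  · rw [abs_of_nonpos (by have := Real.exp_le_exp.2 (neg_le_neg h); linarith),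
      abs_of_nonneg (by linarith)]
    have := key y x hy h; linarith

lemma cont_exp_div_sq (a : ℝ) : ContinuousOn (fun u : ℝ => Real.exp (-(a/u)) * ((u:ℝ)^2)⁻¹) (Set.Ioi 0) := by
  apply ContinuousOn.mul
  · exact Real.continuous_exp.comp_continuousOn
      ((continuousOn_const.div continuousOn_id (fun u hu => ne_of_gt hu)).neg)
  · exact (continuousOn_pow 2).inv₀ (fun u hu => pow_ne_zero 2 (ne_of_gt hu))

lemma rpow_neg_two_eq {u : ℝ} (hu0 : 0 < u) : (u:ℝ) ^ (-2:ℝ) = ((u:ℝ)^2)⁻¹ := by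
  rw [Real.rpow_neg hu0.le]
  congr 1
  rw [show ((2:ℝ) = ((2:ℕ):ℝ)) by norm_num, Real.rpow_natCast]

lemma integrable_exp_div_sq {a : ℝ} (ha : 0 < a) :
    IntegrableOn (fun u : ℝ => Real.exp (-(a/u)) * ((u:ℝ)^2)⁻¹) (Set.Ioi 0) := by
  refine aux_integrableOn (cont_exp_div_sq a) (K := 4 / a^2)
    ?_ (g := fun u => (u:ℝ) ^ (-2:ℝ)) (integrableOn_Ioi_rpow_of_lt (by norm_num) one_pos) ?_
  · intro u hu
    have hu0 : (0:ℝ) < u := hu.1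
    rw [abs_of_nonneg (by positivity)]
    calc Real.exp (-(a/u)) * ((u:ℝ)^2)⁻¹ ≤ (4 * u^2 / a^2) * (u^2)⁻¹ := by
          apply mul_le_mul_of_nonneg_right (exp_bound2 ha hu0) (by positivity)
      _ = 4 / a^2 * (u^2 * (u^2)⁻¹) := by ring
      _ = 4 / a^2 := by rw [mul_inv_cancel₀ (pow_ne_zero 2 (ne_of_gt hu0)), mul_one]
  · intro u hu
    have hu0 : (0:ℝ) < u := lt_trans one_pos hu
    show |Real.exp (-(a/u)) * ((u:ℝ)^2)⁻¹| ≤ (u:ℝ) ^ (-2:ℝ)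
    rw [abs_of_nonneg (by positivity), rpow_neg_two_eq hu0]
    calc Real.exp (-(a/u)) * ((u:ℝ)^2)⁻¹ ≤ 1 * (u^2)⁻¹ := by
          apply mul_le_mul_of_nonneg_right (Real.exp_le_one_iff.2 (neg_nonpos.2 (div_pos ha hu0).le)) (by positivity)
      _ = (u^2)⁻¹ := one_mul _

lemma integral_exp_div_sq {a : ℝ} (ha : 0 < a) :
    ∫ u in Set.Ioi (0:ℝ), Real.exp (-(a/u)) * ((u:ℝ)^2)⁻¹ = a⁻¹ := by
  set f : ℝ → ℝ := fun u => if u ≤ 0 then 0 else Real.exp (-(a/u)) * a⁻¹ with hf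
  have hfeq : ∀ u : ℝ, 0 < u → f u = Real.exp (-(a/u)) * a⁻¹ := by
    intro u hu; simp [hf, not_le.2 hu]
  have hderiv : ∀ u ∈ Set.Ioi (0:ℝ), HasDerivAt f (Real.exp (-(a/u)) * ((u:ℝ)^2)⁻¹) u := by
    intro u hu
    have hu0 : (0:ℝ) < u := hu
    have h0 := ((hasDerivAt_inv hu0.ne').const_mul a).neg
    have heq : (fun u : ℝ => -(a * u⁻¹)) = fun u : ℝ => -(a/u) := by
      funext v; rw [div_eq_mul_inv]
    change HasDerivAt (fun u : ℝ => -(a * u⁻¹)) _ u at h0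
    rw [heq] at h0
    have h1 : HasDerivAt (fun u : ℝ => -(a/u)) (a * (u^2)⁻¹) u := by
      convert h0 using 1; ring
    have h2 : HasDerivAt (fun u : ℝ => Real.exp (-(a/u)) * a⁻¹)
        (Real.exp (-(a/u)) * (a * (u^2)⁻¹) * a⁻¹) u := (h1.exp).mul_const _
    have h3 : Real.exp (-(a/u)) * (a * (u^2)⁻¹) * a⁻¹ = Real.exp (-(a/u)) * ((u:ℝ)^2)⁻¹ := by
      field_simp
    rw [h3] at h2
    apply h2.congr_of_eventuallyEq
    filter_upwards [eventually_gt_nhds hu0] with v hv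
    exact hfeq v hv
  have hcont : ContinuousWithinAt f (Set.Ici (0:ℝ)) 0 := by
    rw [ContinuousWithinAt]
    have hf0 : f 0 = 0 := by simp [hf]
    rw [hf0]
    have hIci : (Set.Ici (0:ℝ)) = {0} ∪ Set.Ioi 0 := by
      ext x; simp [Set.mem_Ici, Set.mem_Ioi, le_iff_lt_or_eq, or_comm, eq_comm]
    rw [hIci, nhdsWithin_union, tendsto_sup]
    constructor
    · rw [nhdsWithin_singleton]
      have := (tendsto_pure_pure f 0).mono_right (pure_le_nhds (f 0))
      rwa [hf0] at this
    · have h1 : Tendsto (fun u : ℝ => a * u⁻¹) (nhdsWithin 0 (Set.Ioi 0)) atTop :=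
        Tendsto.const_mul_atTop ha tendsto_inv_nhdsGT_zero
      have h2 : Tendsto (fun u : ℝ => Real.exp (-(a/u)) * a⁻¹) (nhdsWithin 0 (Set.Ioi 0)) (nhds (0 * a⁻¹)) := by
        apply Tendsto.mul_const
        apply Real.tendsto_exp_atBot.comp
        apply (tendsto_neg_atTop_atBot).comp
        exact h1.congr (fun u => by rw [div_eq_mul_inv])
      rw [zero_mul] at h2
      apply h2.congr'
      filter_upwards [self_mem_nhdsWithin] with u hu
      exact (hfeq u hu).symm
  have htop : Tendsto f atTop (nhds a⁻¹) := by
    have h1 : Tendsto (fun u : ℝ => a / u) atTop (nhds 0) :=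
      tendsto_const_nhds.div_atTop tendsto_id
    have h2 : Tendsto (fun u : ℝ => Real.exp (-(a/u)) * a⁻¹) atTop (nhds (Real.exp (-0) * a⁻¹)) :=
      ((Real.continuous_exp.tendsto _).comp h1.neg).mul_const _
    rw [neg_zero, Real.exp_zero, one_mul] at h2
    apply h2.congr'
    filter_upwards [eventually_gt_atTop (0:ℝ)] with u hu
    exact (hfeq u hu).symm
  have := MeasureTheory.integral_Ioi_of_hasDerivAt_of_tendsto hcont hderiv
    (integrable_exp_div_sq ha) htop
  rw [this]
  simp [hf]

noncomputable def fF (r : ℝ) (u : ℝ) : ℝ :=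
  (Real.exp (-r ^ 2 / (2 * u)) - Real.exp (-1 / (2 * u))) * (2 * u)⁻¹

lemma fF_contOn (x : ℝ) : ContinuousOn (fF x) (Set.Ioi 0) := by
  unfold fF
  have h2u : ∀ u ∈ Set.Ioi (0:ℝ), 2 * u ≠ 0 := fun u hu => by
    have : (0:ℝ) < u := hu; positivity
  refine ContinuousOn.mul (ContinuousOn.sub ?_ ?_) ?_
  · exact Real.continuous_exp.comp_continuousOn
      (continuousOn_const.div ((continuousOn_const.mul continuousOn_id)) h2u)
  · exact Real.continuous_exp.comp_continuousOn
      (continuousOn_const.div ((continuousOn_const.mul continuousOn_id)) h2u)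
  · exact ((continuousOn_const.mul continuousOn_id)).inv₀ h2u

lemma fF_bound_small {x u : ℝ} (hx : 0 < x) (hu : 0 < u) :
    |fF x u| ≤ (x^2)⁻¹ + 1 := by
  unfold fF
  have e1 : Real.exp (-x ^ 2 / (2 * u)) * (2*u)⁻¹ ≤ (x^2)⁻¹ := by
    have h := exp_bound1 (a := x^2/2) (u := u) (by positivity) hu
    rw [show -x^2/(2*u) = -((x^2/2)/u) by ring]
    calc Real.exp (-(x^2/2/u)) * (2*u)⁻¹ ≤ (u / (x^2/2)) * (2*u)⁻¹ :=
          mul_le_mul_of_nonneg_right h (by positivity)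
      _ = (x^2)⁻¹ * (u * u⁻¹) := by field_simp
      _ = (x^2)⁻¹ := by rw [mul_inv_cancel₀ hu.ne', mul_one]
  have e2 : Real.exp (-1 / (2 * u)) * (2*u)⁻¹ ≤ 1 := by
    have h := exp_bound1 (a := (1:ℝ)/2) (u := u) (by norm_num) hu
    rw [show (-1:ℝ)/(2*u) = -((1/2)/u) by ring]
    calc Real.exp (-(1/2/u)) * (2*u)⁻¹ ≤ (u / (1/2)) * (2*u)⁻¹ :=
          mul_le_mul_of_nonneg_right h (by positivity)
      _ = u * u⁻¹ := by field_simp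
      _ = 1 := mul_inv_cancel₀ hu.ne'
  have p1 : (0:ℝ) ≤ Real.exp (-x ^ 2 / (2 * u)) * (2*u)⁻¹ := by positivity
  have p2 : (0:ℝ) ≤ Real.exp (-1 / (2 * u)) * (2*u)⁻¹ := by positivity
  rw [abs_le]
  constructor
  · nlinarith
  · nlinarith [sub_mul (Real.exp (-x ^ 2 / (2 * u))) (Real.exp (-1 / (2 * u))) ((2*u)⁻¹)]

lemma fF_bound_big {x u : ℝ} (hu : 1 < u) :
    |fF x u| ≤ (x^2+1) * (u:ℝ) ^ (-2:ℝ) := by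
  have hu0 : (0:ℝ) < u := lt_trans one_pos hu
  unfold fF
  rw [abs_mul, rpow_neg_two_eq hu0]
  have h1 : |Real.exp (-x ^ 2 / (2 * u)) - Real.exp (-1 / (2 * u))| ≤ |x^2 - 1| / (2*u) := by
    have := exp_sub_exp_le (x := x^2/(2*u)) (y := 1/(2*u)) (by positivity) (by positivity)
    rw [show -x^2/(2*u) = -(x^2/(2*u)) by ring, show (-1:ℝ)/(2*u) = -(1/(2*u)) by ring]
    calc |Real.exp (-(x^2/(2*u))) - Real.exp (-(1/(2*u)))| ≤ |x^2/(2*u) - 1/(2*u)| := this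
      _ = |x^2 - 1| / (2*u) := by
            rw [div_sub_div_same, abs_div, abs_of_pos (show (0:ℝ) < 2*u by positivity)]
  have h2 : |(2*u)⁻¹| = (2*u)⁻¹ := abs_of_pos (by positivity)
  rw [h2]
  calc |Real.exp (-x ^ 2 / (2 * u)) - Real.exp (-1 / (2 * u))| * (2*u)⁻¹
      ≤ (|x^2 - 1| / (2*u)) * (2*u)⁻¹ := mul_le_mul_of_nonneg_right h1 (by positivity)
    _ = |x^2 - 1| / (4 * u^2) := by rw [div_mul_eq_div_div, div_div]; ring_nf
    _ ≤ (x^2 + 1) / u^2 := by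
        apply div_le_div₀ (by positivity) ?_ (by positivity) ?_
        · rcases abs_cases (x^2 - 1) with ⟨h,_⟩|⟨h,_⟩ <;> nlinarith [sq_nonneg x]
        · nlinarith
    _ = (x^2+1) * (u^2)⁻¹ := by ring

lemma fF_integrable {x : ℝ} (hx : 0 < x) : IntegrableOn (fF x) (Set.Ioi 0) := by
  refine aux_integrableOn (fF_contOn x) (K := (x^2)⁻¹ + 1)
    (fun u hu => fF_bound_small hx hu.1)
    (g := fun u => (x^2+1) * (u:ℝ) ^ (-2:ℝ))
    ((integrableOn_Ioi_rpow_of_lt (by norm_num) one_pos).const_mul _)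
    (fun u hu => fF_bound_big hu)

lemma phi_hasDeriv {r : ℝ} (hr : 0 < r) :
    HasDerivAt (fun x => ∫ u in Set.Ioi (0:ℝ), fF x u) (-r⁻¹) r := by
  set F' : ℝ → ℝ → ℝ := fun x u => Real.exp (-x ^ 2 / (2 * u)) * (-(x/u)) * (2*u)⁻¹ with hF'
  have hμ : ∀ {P : ℝ → Prop}, (∀ u ∈ Set.Ioi (0:ℝ), P u) →
      (∀ᵐ u ∂(volume.restrict (Set.Ioi (0:ℝ))), P u) := fun h =>
    (ae_restrict_iff' measurableSet_Ioi).2 (ae_of_all _ h)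
  have key := hasDerivAt_integral_of_dominated_loc_of_deriv_le (μ := volume.restrict (Set.Ioi 0))
    (F := fun x u => fF x u) (F' := F') (x₀ := r)
    (bound := fun u => (3*r/4) * (Real.exp (-((r^2/8)/u)) * ((u:ℝ)^2)⁻¹))
    (Metric.ball_mem_nhds r (half_pos hr))
    (Filter.Eventually.of_forall
      (fun x => ((fF_contOn x).aestronglyMeasurable measurableSet_Ioi)))
    (fF_integrable hr)
    ?_ ?_ ?_ ?_
  · -- conclude
    have heval : (∫ u in Set.Ioi (0:ℝ), F' r u) = -r⁻¹ := by
      have hptw : (fun u : ℝ => F' r u) =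
          fun u : ℝ => (-(r/2)) * (Real.exp (-((r^2/2)/u)) * ((u:ℝ)^2)⁻¹) := by
        funext u
        show Real.exp (-r ^ 2 / (2 * u)) * (-(r/u)) * (2*u)⁻¹ = _
        rw [show -r^2/(2*u) = -((r^2/2)/u) by ring]
        ring
      rw [hptw, MeasureTheory.integral_const_mul, integral_exp_div_sq (by positivity)]
      field_simp
    rw [← heval]
    exact key.2
  · exact ((Real.continuous_exp.comp_continuousOn
      (continuousOn_const.div (continuousOn_const.mul continuousOn_id)
        (fun u hu => by have : (0:ℝ) < u := hu; show (2:ℝ) * u ≠ 0; positivity))).mul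
      (continuousOn_const.div continuousOn_id (fun u hu => ne_of_gt hu)).neg |>.mul
      ((continuousOn_const.mul continuousOn_id).inv₀
        (fun u hu => by have : (0:ℝ) < u := hu; show (2:ℝ) * u ≠ 0; positivity))).aestronglyMeasurable
      measurableSet_Ioi
  · -- bound
    apply hμ
    intro u hu x hx
    have hu0 : (0:ℝ) < u := hu
    rw [Metric.mem_ball, Real.dist_eq, abs_lt] at hx
    have hx1 : r/2 < x := by linarith
    have hx2 : x < 3*r/2 := by linarith
    have hx0 : 0 < x := lt_trans (by positivity) hx1
    have habs : ‖F' x u‖ = Real.exp (-x ^ 2 / (2 * u)) * (x/u) * (2*u)⁻¹ := by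
      rw [hF', Real.norm_eq_abs, abs_mul, abs_mul, abs_of_pos (Real.exp_pos _),
        abs_neg, abs_of_pos (by positivity : (0:ℝ) < x/u),
        abs_of_pos (by positivity : (0:ℝ) < (2*u)⁻¹)]
    rw [habs]
    have hexp : Real.exp (-x ^ 2 / (2 * u)) ≤ Real.exp (-((r^2/8)/u)) := by
      apply Real.exp_le_exp.2
      rw [show -x^2/(2*u) = -((x^2/2)/u) by ring, neg_le_neg_iff]
      exact (div_le_div_iff_of_pos_right hu0).2 (by nlinarith)
    calc Real.exp (-x ^ 2 / (2 * u)) * (x/u) * (2*u)⁻¹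
        ≤ Real.exp (-((r^2/8)/u)) * ((3*r/2)/u) * (2*u)⁻¹ := by
          apply mul_le_mul_of_nonneg_right ?_ (by positivity)
          apply mul_le_mul hexp ((div_le_div_iff_of_pos_right hu0).2 (by linarith))
            (by positivity) (Real.exp_pos _).le
      _ = (3*r/4) * (Real.exp (-((r^2/8)/u)) * ((u:ℝ)^2)⁻¹) := by
          field_simp; ring
  · exact (integrable_exp_div_sq (by positivity : (0:ℝ) < r^2/8)).const_mul _
  · -- differentiability in x
    apply hμ
    intro u hu x hx
    have hu0 : (0:ℝ) < u := hu
    have hd1 : HasDerivAt (fun x : ℝ => -x^2/(2*u)) (-(x/u)) x := by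
      have h := ((hasDerivAt_pow 2 x).div_const (2*u)).neg
      have heq : (fun y : ℝ => -(y^2/(2*u))) = (fun y : ℝ => -y^2/(2*u)) := by
        funext y; ring
      change HasDerivAt (fun y : ℝ => -(y^2/(2*u))) _ x at h
      rw [heq] at h
      refine h.congr_deriv ?_
      field_simp
      ring
    have hd2 := ((hd1.exp).sub_const (Real.exp (-1/(2*u)))).mul_const ((2*u)⁻¹)
    exact hd2

lemma frullani_integral {r : ℝ} (hr : 0 < r) :
    ∫ u in Set.Ioi (0:ℝ), fF r u = -Real.log r := by
  set φ : ℝ → ℝ := fun x => ∫ u in Set.Ioi (0:ℝ), fF x u with hφ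
  have h1 : φ 1 = 0 := by
    rw [hφ]
    simp only [fF, one_pow]
    simp
  have huIcc : ∀ x ∈ Set.uIcc 1 r, 0 < x := by
    intro x hx
    rcases Set.mem_uIcc.1 hx with ⟨h,_⟩|⟨h,_⟩
    · linarith
    · linarith
  have key : ∀ x ∈ Set.uIcc 1 r, HasDerivAt φ (-x⁻¹) x := fun x hx => phi_hasDeriv (huIcc x hx)
  have hint : IntervalIntegrable (fun x : ℝ => -x⁻¹) volume 1 r := by
    apply ContinuousOn.intervalIntegrable
    exact (continuousOn_inv₀.mono (fun x hx => ne_of_gt (huIcc x hx))).neg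
  have hftc := intervalIntegral.integral_eq_sub_of_hasDerivAt key hint
  have hcomp : ∫ x in (1:ℝ)..r, -x⁻¹ = -Real.log r := by
    rw [intervalIntegral.integral_neg]
    rw [integral_inv (by
      intro h
      exact absurd (huIcc 0 h) (lt_irrefl 0))]
    rw [div_one]
  rw [hcomp, h1, sub_zero] at hftc
  linarith [hftc]

noncomputable def fG (m r : ℝ) (u : ℝ) : ℝ :=
  Real.exp (-m ^ 2 * u / 2 - r ^ 2 / (2 * u)) * (2 * u)⁻¹

noncomputable def fI (m r : ℝ) (u : ℝ) : ℝ := fG m r u - fF r u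

lemma fG_contOn (m x : ℝ) : ContinuousOn (fG m x) (Set.Ioi 0) := by
  unfold fG
  have h2u : ∀ u ∈ Set.Ioi (0:ℝ), 2 * u ≠ 0 := fun u hu => by
    have : (0:ℝ) < u := hu; positivity
  refine ContinuousOn.mul ?_ (((continuousOn_const.mul continuousOn_id)).inv₀ h2u)
  exact Real.continuous_exp.comp_continuousOn
    (ContinuousOn.sub ((continuousOn_const.mul continuousOn_id).div_const 2)
      (continuousOn_const.div ((continuousOn_const.mul continuousOn_id)) h2u))

lemma fG_nonneg {m x u : ℝ} (hu : 0 < u) : 0 ≤ fG m x u := by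
  unfold fG; positivity

lemma fG_bound_small {m x u : ℝ} (hx : 0 < x) (hu : 0 < u) : fG m x u ≤ (x^2)⁻¹ := by
  unfold fG
  have h1 : Real.exp (-m ^ 2 * u / 2 - x ^ 2 / (2 * u)) ≤ Real.exp (-((x^2/2)/u)) := by
    apply Real.exp_le_exp.2
    have hmu : 0 ≤ m^2 * u / 2 := by positivity
    have h' : -m^2*u/2 - x^2/(2*u) = -(m^2*u/2) - (x^2/2)/u := by ring
    have h'' : -((x^2/2)/u) = 0 - (x^2/2)/u := by ring
    rw [h', h'']
    linarith
  calc Real.exp (-m ^ 2 * u / 2 - x ^ 2 / (2 * u)) * (2*u)⁻¹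
      ≤ Real.exp (-((x^2/2)/u)) * (2*u)⁻¹ := mul_le_mul_of_nonneg_right h1 (by positivity)
    _ ≤ (u / (x^2/2)) * (2*u)⁻¹ :=
        mul_le_mul_of_nonneg_right (exp_bound1 (by positivity) hu) (by positivity)
    _ = (x^2)⁻¹ * (u * u⁻¹) := by field_simp
    _ = (x^2)⁻¹ := by rw [mul_inv_cancel₀ hu.ne', mul_one]

lemma fG_bound_big {m x u : ℝ} (hu : 1 ≤ u) (hu0 : 0 < u) :
    fG m x u ≤ Real.exp (-(m^2/2) * u) := by
  unfold fG
  have h1 : Real.exp (-m ^ 2 * u / 2 - x ^ 2 / (2 * u)) ≤ Real.exp (-(m^2/2) * u) := by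
    apply Real.exp_le_exp.2
    have : (0:ℝ) ≤ x^2/(2*u) := by positivity
    nlinarith
  have h2 : (2*u)⁻¹ ≤ 1 := by
    rw [inv_le_one_iff₀]; right; linarith
  calc Real.exp (-m ^ 2 * u / 2 - x ^ 2 / (2 * u)) * (2*u)⁻¹
      ≤ Real.exp (-(m^2/2) * u) * 1 := by
        apply mul_le_mul h1 h2 (by positivity) (Real.exp_pos _).le
    _ = _ := mul_one _

lemma fG_integrable {m x : ℝ} (hm : 0 < m) (hx : 0 < x) :
    IntegrableOn (fG m x) (Set.Ioi 0) := by
  refine aux_integrableOn (fG_contOn m x) (K := (x^2)⁻¹)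
    (fun u hu => by rw [abs_of_nonneg (fG_nonneg hu.1)]; exact fG_bound_small hx hu.1)
    (g := fun u => Real.exp (-(m^2/2) * u)) (exp_neg_integrableOn_Ioi 1 (by positivity))
    (fun u hu => by
      have hu0 : (0:ℝ) < u := lt_trans one_pos hu
      rw [abs_of_nonneg (fG_nonneg hu0)]
      exact fG_bound_big (le_of_lt hu) hu0)

noncomputable def Fb (m R : ℝ) (u : ℝ) : ℝ :=
  if u ≤ 1 then (m^2/4 + 1) else (Real.exp (-(m^2/2) * u) + (R^2+1) * (u:ℝ) ^ (-2:ℝ))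

lemma fI_eq {m x u : ℝ} :
    fI m x u = (Real.exp (-x^2/(2*u)) * (Real.exp (-m^2*u/2) - 1) + Real.exp (-1/(2*u))) * (2*u)⁻¹ := by
  unfold fI fG fF
  rw [show -m ^ 2 * u / 2 - x ^ 2 / (2 * u) = (-m^2*u/2) + (-x^2/(2*u)) by ring, Real.exp_add]
  ring

lemma one_sub_exp_le {t : ℝ} : 1 - Real.exp (-t) ≤ t := by
  have := Real.add_one_le_exp (-t); linarith

lemma fI_bound {m x u R : ℝ} (hu : 0 < u) (hx : |x| ≤ R) : |fI m x u| ≤ Fb m R u := by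
  unfold Fb
  by_cases h1 : u ≤ 1
  · rw [if_pos h1, fI_eq]
    have e0 : Real.exp (-m^2*u/2) ≤ 1 :=
      Real.exp_le_one_iff.2 (by nlinarith [sq_nonneg m, hu.le])
    have eA : |Real.exp (-x^2/(2*u)) * (Real.exp (-m^2*u/2) - 1)| ≤ m^2*u/2 := by
      rw [abs_mul, abs_of_pos (Real.exp_pos _), abs_of_nonpos (by linarith)]
      have hle1 : Real.exp (-x^2/(2*u)) ≤ 1 := by
        apply Real.exp_le_one_iff.2
        have : (0:ℝ) ≤ x^2/(2*u) := by positivity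
        have h' : -x^2/(2*u) = -(x^2/(2*u)) := by ring
        rw [h']; linarith
      have h2 : -(Real.exp (-m^2*u/2) - 1) = 1 - Real.exp (-(m^2*u/2)) := by
        rw [show -m^2*u/2 = -(m^2*u/2) by ring]; ring
      rw [h2]
      calc Real.exp (-x^2/(2*u)) * (1 - Real.exp (-(m^2*u/2)))
          ≤ 1 * (m^2*u/2) := by
            apply mul_le_mul hle1 one_sub_exp_le ?_ one_pos.le
            have : Real.exp (-(m^2*u/2)) ≤ 1 :=
              Real.exp_le_one_iff.2 (by nlinarith [sq_nonneg m, hu.le])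
            linarith
        _ = m^2*u/2 := one_mul _
    have eB : Real.exp (-1/(2*u)) ≤ 2*u := by
      have := exp_bound1 (a := (1:ℝ)/2) (u := u) (by norm_num) hu
      rw [show (-1:ℝ)/(2*u) = -((1/2)/u) by ring]
      calc Real.exp (-(1/2/u)) ≤ u/(1/2) := this
        _ = 2*u := by ring
    have eBpos : (0:ℝ) ≤ Real.exp (-1/(2*u)) := (Real.exp_pos _).le
    rw [abs_mul, abs_of_pos (show (0:ℝ) < (2*u)⁻¹ by positivity)]
    have habs : |Real.exp (-x^2/(2*u)) * (Real.exp (-m^2*u/2) - 1) + Real.exp (-1/(2*u))|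
        ≤ m^2*u/2 + 2*u := by
      calc |Real.exp (-x^2/(2*u)) * (Real.exp (-m^2*u/2) - 1) + Real.exp (-1/(2*u))|
          ≤ |Real.exp (-x^2/(2*u)) * (Real.exp (-m^2*u/2) - 1)| + |Real.exp (-1/(2*u))| :=
            abs_add_le _ _
        _ ≤ m^2*u/2 + 2*u := by
            rw [abs_of_nonneg eBpos]; exact add_le_add eA eB
    calc |Real.exp (-x^2/(2*u)) * (Real.exp (-m^2*u/2) - 1) + Real.exp (-1/(2*u))| * (2*u)⁻¹
        ≤ (m^2*u/2 + 2*u) * (2*u)⁻¹ := mul_le_mul_of_nonneg_right habs (by positivity)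
      _ = (m^2/4 + 1) * (u * u⁻¹) := by field_simp; ring
      _ = m^2/4 + 1 := by rw [mul_inv_cancel₀ hu.ne', mul_one]
  · push_neg at h1
    rw [if_neg (not_le.2 h1)]
    unfold fI
    have hG : |fG m x u| ≤ Real.exp (-(m^2/2) * u) := by
      rw [abs_of_nonneg (fG_nonneg hu)]; exact fG_bound_big h1.le hu
    have hFb : |fF x u| ≤ (R^2+1) * (u:ℝ) ^ (-2:ℝ) := by
      refine (fF_bound_big h1).trans ?_
      apply mul_le_mul_of_nonneg_right ?_ (Real.rpow_nonneg hu.le _)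
      have : x^2 ≤ R^2 := by
        have := abs_nonneg x
        nlinarith [sq_abs x]
      linarith
    calc |fG m x u - fF x u| ≤ |fG m x u| + |fF x u| := abs_sub _ _
      _ ≤ _ := add_le_add hG hFb

lemma Fb_nonneg {m R u : ℝ} (hu : 0 < u) : 0 ≤ Fb m R u := by
  unfold Fb
  by_cases h : u ≤ 1
  · rw [if_pos h]; positivity
  · rw [if_neg h]
    have : (0:ℝ) ≤ (R^2+1) * (u:ℝ) ^ (-2:ℝ) :=
      mul_nonneg (by positivity) (Real.rpow_nonneg hu.le _)
    have := (Real.exp_pos (-(m^2/2) * u)).le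
    linarith

lemma Fb_integrable (m R : ℝ) (hm : 0 < m) : IntegrableOn (Fb m R) (Set.Ioi 0) := by
  have hsplit : Set.Ioi (0:ℝ) = Set.Ioc 0 1 ∪ Set.Ioi 1 :=
    (Set.Ioc_union_Ioi_eq_Ioi zero_le_one).symm
  rw [hsplit]
  refine MeasureTheory.IntegrableOn.union ?_ ?_
  · have hc : IntegrableOn (fun _ : ℝ => m^2/4 + 1) (Set.Ioc (0:ℝ) 1) :=
      integrableOn_const (C := m^2/4 + 1) measure_Ioc_lt_top.ne
    apply hc.congr_fun ?_ measurableSet_Ioc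
    intro u hu
    simp only [Fb, if_pos hu.2]
  · have hadd : IntegrableOn
        (fun u : ℝ => Real.exp (-(m^2/2) * u) + (R^2+1) * (u:ℝ) ^ (-2:ℝ)) (Set.Ioi 1) :=
      ((exp_neg_integrableOn_Ioi 1 (by positivity : (0:ℝ) < m^2/2))).add
        ((integrableOn_Ioi_rpow_of_lt (show (-2:ℝ) < -1 by norm_num) one_pos).const_mul (R^2+1))
    apply hadd.congr_fun ?_ measurableSet_Ioi
    intro u hu
    simp only [Fb, if_neg (not_le.2 (Set.mem_Ioi.1 hu))]

lemma fI_contOn (m x : ℝ) : ContinuousOn (fI m x) (Set.Ioi 0) :=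
  (fG_contOn m x).sub (fF_contOn x)

lemma fI_integrable {m : ℝ} (x : ℝ) (hm : 0 < m) : IntegrableOn (fI m x) (Set.Ioi 0) := by
  refine Integrable.mono (Fb_integrable m |x| hm)
    ((fI_contOn m x).aestronglyMeasurable measurableSet_Ioi) ?_
  refine (ae_restrict_iff' measurableSet_Ioi).2 (ae_of_all _ fun u hu => ?_)
  have hu0 : (0:ℝ) < u := hu
  rw [Real.norm_eq_abs, Real.norm_eq_abs]
  exact (fI_bound hu0 (le_refl |x|)).trans (le_abs_self _)

noncomputable def gmF (m : ℝ) : ℝ → ℝ :=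
  fun x => (∫ u in Set.Ioi (0:ℝ), fI m x u) - Real.log (max 1 x)

lemma fI_contAt_x {m u : ℝ} (hu : 0 < u) (x₀ : ℝ) :
    ContinuousAt (fun x => fI m x u) x₀ := by
  have c1 : Continuous fun x : ℝ => Real.exp (-m ^ 2 * u / 2 - x ^ 2 / (2 * u)) :=
    Real.continuous_exp.comp (continuous_const.sub ((continuous_pow 2).div_const (2*u)))
  have c2 : Continuous fun x : ℝ => Real.exp (-x ^ 2 / (2 * u)) :=
    Real.continuous_exp.comp (((continuous_pow 2).neg).div_const (2*u))
  have : Continuous fun x : ℝ => fI m x u := by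
    unfold fI fG fF
    exact ((c1.mul continuous_const).sub
      ((c2.sub continuous_const).mul continuous_const))
  exact this.continuousAt

lemma gmF_continuous {m : ℝ} (hm : 0 < m) : Continuous (gmF m) := by
  apply Continuous.sub
  · rw [continuous_iff_continuousAt]
    intro x₀
    apply MeasureTheory.continuousAt_of_dominated (bound := Fb m (|x₀| + 1))
    · exact Filter.Eventually.of_forall
        (fun x => (fI_contOn m x).aestronglyMeasurable measurableSet_Ioi)
    · filter_upwards [Metric.ball_mem_nhds x₀ one_pos] with x hx
      refine (ae_restrict_iff' measurableSet_Ioi).2 (ae_of_all _ fun u hu => ?_)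
      have hu0 : (0:ℝ) < u := hu
      rw [Real.norm_eq_abs]
      apply fI_bound hu0
      rw [Metric.mem_ball, Real.dist_eq] at hx
      have := abs_sub_abs_le_abs_sub x x₀
      linarith
    · exact Fb_integrable m _ hm
    · exact (ae_restrict_iff' measurableSet_Ioi).2
        (ae_of_all _ fun u hu => fI_contAt_x hu x₀)
  · rw [continuous_iff_continuousAt]
    intro x₀
    have h1 : max 1 x₀ ≠ 0 := (lt_of_lt_of_le one_pos (le_max_left _ _)).ne'
    exact (Real.continuousAt_log h1).comp ((continuous_const.max continuous_id).continuousAt)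

lemma gmF_identity {m r : ℝ} (hm : 0 < m) (hr : 0 < r) :
    (∫ u in Set.Ioi (0:ℝ), fG m r u) = max 0 (Real.log (1/r)) + gmF m r := by
  have hsub : (∫ u in Set.Ioi (0:ℝ), fI m r u) =
      (∫ u in Set.Ioi (0:ℝ), fG m r u) - (∫ u in Set.Ioi (0:ℝ), fF r u) := by
    unfold fI
    exact MeasureTheory.integral_sub (fG_integrable hm hr) (fF_integrable hr)
  rw [gmF, hsub, frullani_integral hr]
  rw [one_div, Real.log_inv]
  rcases le_total 1 r with h | h
  · rw [max_eq_right h, max_eq_left (by simpa using Real.log_nonneg h)]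
    ring
  · rw [max_eq_left h, Real.log_one, max_eq_right (by simpa using Real.log_nonpos (by linarith) h)]
    ring

noncomputable def hker (m : ℝ) (u : ℝ) : ℝ :=
  Real.exp (-(m^2*u/4) - 1/(4*u)) * (2 * u)⁻¹

lemma hker_contOn (m : ℝ) : ContinuousOn (hker m) (Set.Ioi 0) := by
  unfold hker
  have h2u : ∀ u ∈ Set.Ioi (0:ℝ), 2 * u ≠ 0 := fun u hu => by
    have : (0:ℝ) < u := hu; positivity
  have h4u : ∀ u ∈ Set.Ioi (0:ℝ), 4 * u ≠ 0 := fun u hu => by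
    have : (0:ℝ) < u := hu; positivity
  refine ContinuousOn.mul ?_ (((continuousOn_const.mul continuousOn_id)).inv₀ h2u)
  exact Real.continuous_exp.comp_continuousOn
    (ContinuousOn.sub ((continuousOn_const.mul continuousOn_id).div_const 4).neg
      (continuousOn_const.div ((continuousOn_const.mul continuousOn_id)) h4u))

lemma hker_nonneg {m u : ℝ} (hu : 0 < u) : 0 ≤ hker m u := by
  unfold hker; positivity

lemma hker_integrable {m : ℝ} (hm : 0 < m) : IntegrableOn (hker m) (Set.Ioi 0) := by
  refine aux_integrableOn (hker_contOn m) (K := 2)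
    ?_ (g := fun u => Real.exp (-(m^2/4) * u)) (exp_neg_integrableOn_Ioi 1 (by positivity)) ?_
  · intro u hu
    have hu0 : (0:ℝ) < u := hu.1
    rw [abs_of_nonneg (hker_nonneg hu0)]
    unfold hker
    have h1 : Real.exp (-(m^2*u/4) - 1/(4*u)) ≤ Real.exp (-((1/4)/u)) := by
      apply Real.exp_le_exp.2
      have hmu : 0 ≤ m^2*u/4 := by positivity
      have he : -(m^2*u/4) - 1/(4*u) = -(m^2*u/4) - (1/4)/u := by ring
      have he2 : -((1/4)/u) = 0 - (1/4)/u := by ring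
      rw [he, he2]
      linarith
    calc Real.exp (-(m^2*u/4) - 1/(4*u)) * (2*u)⁻¹
        ≤ (u/(1/4)) * (2*u)⁻¹ := by
          apply mul_le_mul_of_nonneg_right (h1.trans (exp_bound1 (by norm_num) hu0)) (by positivity)
      _ = 2 * (u * u⁻¹) := by field_simp; ring
      _ = 2 := by rw [mul_inv_cancel₀ hu0.ne', mul_one]
  · intro u hu
    have hu0 : (0:ℝ) < u := lt_trans one_pos hu
    rw [abs_of_nonneg (hker_nonneg hu0)]
    unfold hker
    have h1 : Real.exp (-(m^2*u/4) - 1/(4*u)) ≤ Real.exp (-(m^2/4) * u) := by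
      apply Real.exp_le_exp.2
      have : (0:ℝ) < 1/(4*u) := by positivity
      nlinarith
    have h2 : (2*u)⁻¹ ≤ 1 := by
      rw [inv_le_one_iff₀]; right; linarith [show (1:ℝ) < u from hu]
    calc Real.exp (-(m^2*u/4) - 1/(4*u)) * (2*u)⁻¹
        ≤ Real.exp (-(m^2/4) * u) * 1 := mul_le_mul h1 h2 (by positivity) (Real.exp_pos _).le
      _ = _ := mul_one _

lemma fG_decay_ptwise {m r u : ℝ} (hm : 0 < m) (hr1 : 1 ≤ r) (hu : 0 < u) :
    fG m r u ≤ Real.exp (-(m/2) * r) * hker m u := by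
  unfold fG hker
  have hkey : (-(m/2)*r + (-(m^2*u/4) - 1/(4*u))) - (-m^2*u/2 - r^2/(2*u)) =
      (m*u - r)^2/(4*u) + (r^2-1)/(4*u) := by
    field_simp
    ring
  have hpos : 0 ≤ (m*u - r)^2/(4*u) + (r^2-1)/(4*u) := by
    apply add_nonneg (by positivity)
    apply div_nonneg ?_ (by positivity)
    nlinarith
  have hexp : Real.exp (-m ^ 2 * u / 2 - r ^ 2 / (2 * u)) ≤
      Real.exp (-(m/2)*r + (-(m^2*u/4) - 1/(4*u))) := by
    apply Real.exp_le_exp.2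
    linarith [hkey, hpos]
  calc Real.exp (-m ^ 2 * u / 2 - r ^ 2 / (2 * u)) * (2*u)⁻¹
      ≤ Real.exp (-(m/2)*r + (-(m^2*u/4) - 1/(4*u))) * (2*u)⁻¹ :=
        mul_le_mul_of_nonneg_right hexp (by positivity)
    _ = Real.exp (-(m/2) * r) * (Real.exp (-(m^2*u/4) - 1/(4*u)) * (2*u)⁻¹) := by
        rw [Real.exp_add]; ring

lemma gmF_decay {m r : ℝ} (hm : 0 < m) (hr1 : 1 ≤ r) :
    |gmF m r| ≤ ((∫ u in Set.Ioi (0:ℝ), hker m u) + 1) * Real.exp (-(m/2) * r) := by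
  have hr0 : (0:ℝ) < r := lt_of_lt_of_le one_pos hr1
  have hmax : max 0 (Real.log (1/r)) = 0 := by
    rw [one_div, Real.log_inv]
    exact max_eq_left (neg_nonpos.2 (Real.log_nonneg hr1))
  have hgm : gmF m r = ∫ u in Set.Ioi (0:ℝ), fG m r u := by
    have := gmF_identity hm hr0
    rw [hmax] at this
    linarith
  have h0 : 0 ≤ ∫ u in Set.Ioi (0:ℝ), fG m r u :=
    MeasureTheory.setIntegral_nonneg measurableSet_Ioi fun u hu => fG_nonneg hu
  have hK : 0 ≤ ∫ u in Set.Ioi (0:ℝ), hker m u :=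
    MeasureTheory.setIntegral_nonneg measurableSet_Ioi fun u hu => hker_nonneg hu
  have hmono : (∫ u in Set.Ioi (0:ℝ), fG m r u) ≤
      ∫ u in Set.Ioi (0:ℝ), Real.exp (-(m/2) * r) * hker m u := by
    apply MeasureTheory.setIntegral_mono_on (fG_integrable hm hr0)
      ((hker_integrable hm).const_mul _) measurableSet_Ioi
    intro u hu
    exact fG_decay_ptwise hm hr1 hu
  rw [MeasureTheory.integral_const_mul] at hmono
  rw [hgm, abs_of_nonneg h0]
  calc (∫ u in Set.Ioi (0:ℝ), fG m r u)
      ≤ Real.exp (-(m/2) * r) * ∫ u in Set.Ioi (0:ℝ), hker m u := hmono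
    _ ≤ ((∫ u in Set.Ioi (0:ℝ), hker m u) + 1) * Real.exp (-(m/2) * r) := by
        rw [mul_comm]
        apply mul_le_mul_of_nonneg_right (by linarith) (Real.exp_pos _).le

lemma gmF_bounded {m : ℝ} (hm : 0 < m) :
    ∀ r : ℝ, 0 ≤ r →
      |gmF m r| ≤ (∫ u in Set.Ioi (0:ℝ), Fb m 1 u) + ((∫ u in Set.Ioi (0:ℝ), hker m u) + 1) := by
  intro r hr
  have hFbK : 0 ≤ ∫ u in Set.Ioi (0:ℝ), Fb m 1 u :=
    MeasureTheory.setIntegral_nonneg measurableSet_Ioi fun u hu => Fb_nonneg hu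
  have hK : 0 ≤ ∫ u in Set.Ioi (0:ℝ), hker m u :=
    MeasureTheory.setIntegral_nonneg measurableSet_Ioi fun u hu => hker_nonneg hu
  rcases le_total r 1 with h | h
  · have hmax : max 1 r = 1 := max_eq_left h
    have hgm : gmF m r = ∫ u in Set.Ioi (0:ℝ), fI m r u := by
      rw [gmF, hmax, Real.log_one, sub_zero]
    rw [hgm]
    have hb : ‖∫ u in Set.Ioi (0:ℝ), fI m r u‖ ≤ ∫ u in Set.Ioi (0:ℝ), Fb m 1 u := by
      apply MeasureTheory.norm_integral_le_of_norm_le (Fb_integrable m 1 hm)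
      refine (ae_restrict_iff' measurableSet_Ioi).2 (ae_of_all _ fun u hu => ?_)
      rw [Real.norm_eq_abs]
      exact fI_bound hu (by rw [abs_of_nonneg hr]; exact h)
    rw [Real.norm_eq_abs] at hb
    linarith
  · have := gmF_decay hm h
    have hexp : Real.exp (-(m/2) * r) ≤ 1 := by
      apply Real.exp_le_one_iff.2
      have : 0 < m/2 * r := by positivity
      nlinarith
    calc |gmF m r| ≤ ((∫ u in Set.Ioi (0:ℝ), hker m u) + 1) * Real.exp (-(m/2) * r) := this
      _ ≤ ((∫ u in Set.Ioi (0:ℝ), hker m u) + 1) * 1 :=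
          mul_le_mul_of_nonneg_left hexp (by linarith)
      _ = (∫ u in Set.Ioi (0:ℝ), hker m u) + 1 := mul_one _
      _ ≤ _ := by linarith

/-- Decomposition of the covariance kernel of the whole-plane massive Gaussian
free field: for every `m > 0` there are a bounded function `g_m`, continuous on
`[0,∞)`, and constants `C, c > 0` with `|g_m(r)| ≤ C e^{-c r}` for `r ≥ 1`, such
that for all `r > 0`,
`∫₀^∞ exp(-m²u/2 - r²/(2u)) (2u)⁻¹ du = ln₊(1/r) + g_m(r)`. -/
theorem massive_green_function_decomposition (m : ℝ) (hm : 0 < m) :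
    ∃ (gm : ℝ → ℝ) (C c : ℝ),
      ContinuousOn gm (Set.Ici (0 : ℝ)) ∧
      (∃ Cb : ℝ, ∀ r : ℝ, 0 ≤ r → |gm r| ≤ Cb) ∧
      0 < C ∧ 0 < c ∧
      (∀ r : ℝ, 1 ≤ r → |gm r| ≤ C * Real.exp (-c * r)) ∧
      (∀ r : ℝ, 0 < r →
        (∫ u in Set.Ioi (0 : ℝ),
            Real.exp (-m ^ 2 * u / 2 - r ^ 2 / (2 * u)) * (2 * u)⁻¹) =
          max 0 (Real.log (1 / r)) + gm r) := by
  have hK : 0 ≤ ∫ u in Set.Ioi (0:ℝ), hker m u :=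
    MeasureTheory.setIntegral_nonneg measurableSet_Ioi fun u hu => hker_nonneg hu
  refine ⟨gmF m, (∫ u in Set.Ioi (0:ℝ), hker m u) + 1, m/2,
    (gmF_continuous hm).continuousOn, ⟨_, gmF_bounded hm⟩,
    by linarith, by positivity, ?_, ?_⟩
  · intro r hr
    have := gmF_decay hm hr
    convert this using 3
  · intro r hr
    exact gmF_identity hm hr
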